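/- Let k be a commutative ring, A a k-algebra, M an (A,k)-dimodule, and K a commutative associative unital k-algebra. If K is a flat k-module and A is finitely presented as a k-module, then the canonical K-linear map ω : Hom_k(A,M) ⊗_k K → Hom_K(A⊗_k K, M⊗_k K), determined by ω(f ⊗ x)(a ⊗ y) = f(a) ⊗ xy, restricts to an isomorphism of K-modules Der_k(A,M) ⊗_k K ≅ Der_K(A⊗_k K, M⊗_k K). -/

import Mathlib

open TensorProduct

/-- The `k`-submodule of `Hom_k(A,M)` consisting of the derivations of the
`k`-algebra `A` (with multiplication `mul`) with values in the
`(A,k)`-dimodule `M` (with left action `lact` and right action `ract`). -/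
def derSubmodule {k A M : Type*} [CommRing k]
    [AddCommGroup A] [Module k A] [AddCommGroup M] [Module k M]
    (mul : A →ₗ[k] A →ₗ[k] A)
    (lact : A →ₗ[k] M →ₗ[k] M) (ract : M →ₗ[k] A →ₗ[k] M) :
    Submodule k (A →ₗ[k] M) where
  carrier := {f | ∀ a b : A, f (mul a b) = ract (f a) b + lact a (f b)}
  add_mem' := by
    intro f g hf hg a b
    simp only [LinearMap.add_apply, hf a b, hg a b, map_add, LinearMap.add_apply]
    abel
  zero_mem' := by intro a b; simp
  smul_mem' := by
    intro c f hf a b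
    simp only [LinearMap.smul_apply, hf a b, map_smul, smul_add, LinearMap.smul_apply]

section Aux

variable {k M K : Type*} [CommRing k]
    [AddCommGroup M] [Module k M]
    [CommRing K] [Algebra k K]

lemma auxPiInj (ι : Type*) [Fintype ι] [DecidableEq ι] :
    Function.Injective (TensorProduct.piRightHom k K K (fun _ : ι => M)) := by
  intro x y h
  apply (TensorProduct.piRight k K K (fun _ : ι => M)).injective
  simpa only [TensorProduct.piRight_apply] using h

end Aux

set_option maxHeartbeats 1000000 in
/-- If `K` is a flat `k`-module and `A` is finitely presented as a
`k`-module, the canonical `K`-linear map `ω : Hom_k(A,M) ⊗_k K → Hom_K(A_K, M_K)`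
restricts to an isomorphism of `K`-modules `Der_k(A,M) ⊗_k K ≅ Der_K(A_K, M_K)`;
formalized: the composite `K`-linear map
`K ⊗[k] Der_k(A,M) → K ⊗[k] Hom_k(A,M) → Hom_K(A_K, M_K)` is injective and its
range is exactly the set of `K`-linear derivations of `A_K` with values in `M_K`. -/
theorem stmt_1 {k A M K : Type*} [CommRing k]
    [AddCommGroup A] [Module k A] [AddCommGroup M] [Module k M]
    [CommRing K] [Algebra k K]
    [Module.Flat k K] [Module.FinitePresentation k A]
    (mul : A →ₗ[k] A →ₗ[k] A)
    (lact : A →ₗ[k] M →ₗ[k] M) (ract : M →ₗ[k] A →ₗ[k] M)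
    (mulK : (K ⊗[k] A) →ₗ[K] (K ⊗[k] A) →ₗ[K] (K ⊗[k] A))
    (hmulK : ∀ (x y : K) (a b : A),
      mulK (x ⊗ₜ a) (y ⊗ₜ b) = (x * y) ⊗ₜ (mul a b))
    (lactK : (K ⊗[k] A) →ₗ[K] (K ⊗[k] M) →ₗ[K] (K ⊗[k] M))
    (hlactK : ∀ (x y : K) (a : A) (m : M),
      lactK (x ⊗ₜ a) (y ⊗ₜ m) = (x * y) ⊗ₜ (lact a m))
    (ractK : (K ⊗[k] M) →ₗ[K] (K ⊗[k] A) →ₗ[K] (K ⊗[k] M))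
    (hractK : ∀ (x y : K) (m : M) (a : A),
      ractK (x ⊗ₜ m) (y ⊗ₜ a) = (x * y) ⊗ₜ (ract m a))
    (ω : (K ⊗[k] (A →ₗ[k] M)) →ₗ[K] ((K ⊗[k] A) →ₗ[K] (K ⊗[k] M)))
    (hω : ∀ (x y : K) (f : A →ₗ[k] M) (a : A),
      ω (x ⊗ₜ f) (y ⊗ₜ a) = (x * y) ⊗ₜ f a) :
    Function.Injective
      (ω ∘ₗ ((derSubmodule mul lact ract).subtype.baseChange K)) ∧
    Set.range
      ⇑(ω ∘ₗ ((derSubmodule mul lact ract).subtype.baseChange K)) =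
      {g : (K ⊗[k] A) →ₗ[K] (K ⊗[k] M) |
        ∀ u v : K ⊗[k] A, g (mulK u v) = ractK (g u) v + lactK u (g v)} := by
    classical
  set D := derSubmodule mul lact ract with hD
  have hmemD : ∀ f : A →ₗ[k] M, f ∈ D ↔
      ∀ a b : A, f (mul a b) = ract (f a) b + lact a (f b) := fun f => Iff.rfl
  obtain ⟨n, q, hq⟩ := Module.Finite.exists_fin' k A
  set a : Fin n → A := fun i => q (Pi.single i 1) with ha
  have hsingle : ∀ (c : Fin n → k) (i : Fin n),
      (Pi.single i (c i) : Fin n → k) = c i • (Pi.single i (1:k) : Fin n → k) := by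
    intro c i
    rw [← Pi.single_smul, smul_eq_mul, mul_one]
  have hqc : ∀ c : Fin n → k, q c = ∑ i, c i • a i := by
    intro c
    conv_lhs => rw [← Finset.univ_sum_single c]
    rw [map_sum]
    refine Finset.sum_congr rfl fun i _ => ?_
    rw [hsingle c i, map_smul]
  have hspan : Submodule.span k (Set.range a) = ⊤ := by
    rw [eq_top_iff]
    rintro v -
    obtain ⟨c, rfl⟩ := hq v
    rw [hqc]
    exact Submodule.sum_mem _ fun i _ =>
      Submodule.smul_mem _ _ (Submodule.subset_span ⟨i, rfl⟩)
  -- evaluation map on generators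
  set φ : (A →ₗ[k] M) →ₗ[k] (Fin n → M) :=
    LinearMap.pi (fun i => LinearMap.applyₗ (a i)) with hφ
  have hφap : ∀ (f : A →ₗ[k] M) i, φ f i = f (a i) := fun f i => rfl
  have hφinj : Function.Injective φ := by
    rw [← LinearMap.ker_eq_bot, eq_bot_iff]
    intro f hf
    rw [LinearMap.mem_ker] at hf
    rw [Submodule.mem_bot]
    apply LinearMap.ext_on hspan
    rintro x ⟨i, rfl⟩
    have := congrFun hf i
    rw [hφap] at this
    simpa using this
  -- the "defect" map
  set Ψ : (A →ₗ[k] M) →ₗ[k] (Fin n × Fin n → M) :=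
    LinearMap.pi (fun ij => LinearMap.applyₗ (mul (a ij.1) (a ij.2))
      - (ract.flip (a ij.2)) ∘ₗ LinearMap.applyₗ (a ij.1)
      - (lact (a ij.1)) ∘ₗ LinearMap.applyₗ (a ij.2)) with hΨ
  have hΨap : ∀ (f : A →ₗ[k] M) ij, Ψ f ij
      = f (mul (a ij.1) (a ij.2)) - ract (f (a ij.1)) (a ij.2)
        - lact (a ij.1) (f (a ij.2)) := fun f ij => rfl
  have hkerΨ : LinearMap.ker Ψ = D := by
    ext f
    rw [LinearMap.mem_ker, hmemD]
    constructor
    · intro h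
      have hB : (mul.compr₂ f - ract ∘ₗ f - lact.compl₂ f) = 0 := by
        apply LinearMap.ext_on hspan
        rintro x ⟨i, rfl⟩
        apply LinearMap.ext_on hspan
        rintro y ⟨j, rfl⟩
        have hij := congrFun h (i, j)
        rw [hΨap] at hij
        simpa [LinearMap.compr₂_apply, LinearMap.compl₂_apply, sub_sub] using hij
      intro b c
      have h2 := DFunLike.congr_fun (DFunLike.congr_fun hB b) c
      simp only [LinearMap.sub_apply, LinearMap.compr₂_apply, LinearMap.compl₂_apply,
        LinearMap.comp_apply, LinearMap.zero_apply, sub_sub, sub_eq_zero] at h2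
      exact h2
    · intro h
      funext ij
      rw [hΨap, h (a ij.1) (a ij.2)]
      simp only [Pi.zero_apply]
      abel
  -- pi base change injectivity
  have hinj1 := auxPiInj (k := k) (M := M) (K := K) (Fin n)
  have hinj2 := auxPiInj (k := k) (M := M) (K := K) (Fin n × Fin n)
  set pR := TensorProduct.piRightHom k K K (fun _ : Fin n => M) with hpR
  set pR2 := TensorProduct.piRightHom k K K (fun _ : Fin n × Fin n => M) with hpR2
  -- bridging lemmas
  have L1 : ∀ (t : K ⊗[k] (A →ₗ[k] M)) (i : Fin n),
      pR (φ.baseChange K t) i = ω t ((1:K) ⊗ₜ[k] a i) := by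
    intro t
    induction t using TensorProduct.induction_on with
    | zero => intro i; simp
    | tmul x f =>
        intro i
        rw [LinearMap.baseChange_tmul]
        rw [hpR, TensorProduct.piRightHom_tmul, hω]
        beta_reduce
        rw [hφap, mul_one]
    | add t₁ t₂ h₁ h₂ => intro i; simp only [map_add, LinearMap.add_apply, Pi.add_apply, h₁, h₂]
  have L2 : ∀ (t : K ⊗[k] (A →ₗ[k] M)) (ij : Fin n × Fin n),
      pR2 (Ψ.baseChange K t) ij
        = ω t (mulK ((1:K) ⊗ₜ[k] a ij.1) ((1:K) ⊗ₜ[k] a ij.2))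
          - ractK (ω t ((1:K) ⊗ₜ[k] a ij.1)) ((1:K) ⊗ₜ[k] a ij.2)
          - lactK ((1:K) ⊗ₜ[k] a ij.1) (ω t ((1:K) ⊗ₜ[k] a ij.2)) := by
    intro t
    induction t using TensorProduct.induction_on with
    | zero => intro ij; simp
    | tmul x f =>
        intro ij
        rw [LinearMap.baseChange_tmul, hpR2, TensorProduct.piRightHom_tmul]
        beta_reduce
        rw [hΨap]
        rw [hmulK, one_mul, hω, hω, hω, mul_one, hractK, hlactK]
        rw [TensorProduct.tmul_sub, TensorProduct.tmul_sub]
        rw [mul_one, one_mul]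
    | add t₁ t₂ h₁ h₂ =>
        intro ij
        simp only [map_add, LinearMap.add_apply, Pi.add_apply]
        rw [h₁, h₂]
        abel
  
  have L3 : ∀ (g₁ g₂ : (K ⊗[k] A) →ₗ[K] (K ⊗[k] M)),
      (∀ i, g₁ ((1:K) ⊗ₜ[k] a i) = g₂ ((1:K) ⊗ₜ[k] a i)) → g₁ = g₂ := by
    intro g₁ g₂ h
    have key : ∀ b : A, g₁ ((1:K) ⊗ₜ[k] b) = g₂ ((1:K) ⊗ₜ[k] b) := by
      intro b
      have hb : b ∈ Submodule.span k (Set.range a) := hspan ▸ Submodule.mem_top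
      induction hb using Submodule.span_induction with
      | mem x hx => obtain ⟨i, rfl⟩ := hx; exact h i
      | zero => simp
      | add x y _ _ hx hy => rw [TensorProduct.tmul_add, map_add, map_add, hx, hy]
      | smul c x _ hx =>
          rw [TensorProduct.tmul_smul, LinearMap.map_smul_of_tower,
            LinearMap.map_smul_of_tower, hx]
    apply LinearMap.ext
    intro u
    induction u using TensorProduct.induction_on with
    | zero => simp
    | tmul x b =>
        have hx : (x : K) ⊗ₜ[k] b = x • ((1:K) ⊗ₜ[k] b) := by
          rw [TensorProduct.smul_tmul', smul_eq_mul, mul_one]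
        rw [hx, map_smul, map_smul, key]
    | add u v hu hv => rw [map_add, map_add, hu, hv]
  have hbc_sub : ∀ t : K ⊗[k] ↥D, (D.subtype.baseChange K) t = (D.subtype.lTensor K) t :=
    fun t => congrFun (LinearMap.baseChange_eq_ltensor (f := D.subtype)) t
  have hsubinj : Function.Injective (D.subtype.baseChange K) := by
    intro s t hst
    apply Module.Flat.lTensor_preserves_injective_linearMap (M := K) D.subtype D.injective_subtype
    rw [← hbc_sub, ← hbc_sub, hst]
  -- Injectivity
  have hInj : Function.Injective (ω ∘ₗ (D.subtype.baseChange K)) := by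
    have h0 : ∀ t, (ω ∘ₗ (D.subtype.baseChange K)) t = 0 → t = 0 := by
      intro t ht
      rw [LinearMap.comp_apply] at ht
      have h1 : pR (φ.baseChange K (D.subtype.baseChange K t)) = 0 := by
        funext i
        rw [L1, ht]
        simp
      have h2 : φ.baseChange K (D.subtype.baseChange K t) = 0 := by
        apply hinj1
        rw [h1, map_zero]
      have h3 : D.subtype.baseChange K t = 0 := by
        have hinjφK : Function.Injective (φ.lTensor K) :=
          Module.Flat.lTensor_preserves_injective_linearMap (M := K) φ hφinj
        apply hinjφK
        rw [map_zero, ← congrFun (LinearMap.baseChange_eq_ltensor (f := φ)) _, h2]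
      apply hsubinj
      rw [h3, map_zero]
    intro s t hst
    have hsub := map_sub (ω ∘ₗ (D.subtype.baseChange K)) s t
    rw [hst, sub_self] at hsub
    exact sub_eq_zero.mp (h0 _ hsub)
  refine ⟨hInj, ?_⟩
  ext g
  simp only [Set.mem_range, Set.mem_setOf_eq]
  constructor
  · rintro ⟨t, rfl⟩
    intro u v
    simp only [LinearMap.comp_apply]
    induction t using TensorProduct.induction_on with
    | zero => simp
    | tmul x f =>
        rw [LinearMap.baseChange_tmul]
        induction u using TensorProduct.induction_on with
        | zero => simp
        | tmul y b =>
            induction v using TensorProduct.induction_on with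
            | zero => simp
            | tmul z c =>
                rw [hmulK, hω, hω, hω, hractK, hlactK]
                have hf := (hmemD _).mp f.2
                rw [Submodule.coe_subtype, hf b c, TensorProduct.tmul_add]
                congr 2
                · ring
                · ring
            | add v₁ v₂ h₁ h₂ =>
                simp only [map_add, LinearMap.add_apply] at h₁ h₂ ⊢
                rw [h₁, h₂]
                abel
        | add u₁ u₂ h₁ h₂ =>
            simp only [map_add, LinearMap.add_apply] at h₁ h₂ ⊢
            rw [h₁, h₂]
            abel
    | add t₁ t₂ h₁ h₂ =>
        simp only [map_add, LinearMap.add_apply] at h₁ h₂ ⊢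
        rw [h₁, h₂]
        abel
  · intro hg
    obtain ⟨sm, hsm⟩ := Module.FinitePresentation.fg_ker q hq
    have hinj3 := auxPiInj (k := k) (M := M) (K := K) ↥sm
    set pR3 := TensorProduct.piRightHom k K K (fun _ : ↥sm => M) with hpR3
    set ψ : (Fin n → M) →ₗ[k] (↥sm → M) :=
      LinearMap.pi (fun j => (Fintype.bilinearCombination k k).flip (j : Fin n → k)) with hψ
    have hψap : ∀ (v : Fin n → M) (j : ↥sm),
        ψ v j = ∑ i, (j : Fin n → k) i • v i := fun v j => rfl
    have hjker : ∀ j : ↥sm, q (j : Fin n → k) = 0 := by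
      intro j
      have hm : (j : Fin n → k) ∈ LinearMap.ker q := by
        rw [← hsm]; exact Submodule.subset_span (Finset.mem_coe.mpr j.2)
      exact LinearMap.mem_ker.mp hm
    have hexact : Function.Exact φ ψ := by
      intro v
      constructor
      · intro hv
        have hkerle : LinearMap.ker q ≤ LinearMap.ker (Fintype.linearCombination k v) := by
          rw [← hsm, Submodule.span_le]
          intro x hx
          rw [SetLike.mem_coe, LinearMap.mem_ker]
          have hx' := congrFun hv ⟨x, Finset.mem_coe.mp hx⟩
          rw [hψap] at hx'
          rw [Fintype.linearCombination_apply]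
          simpa using hx'
        set e := q.quotKerEquivOfSurjective hq with he
        set f : A →ₗ[k] M :=
          ((LinearMap.ker q).liftQ (Fintype.linearCombination k v) hkerle)
            ∘ₗ e.symm.toLinearMap with hf
        have hfq : ∀ c : Fin n → k, f (q c) = Fintype.linearCombination k v c := by
          intro c
          have h1 : e (Submodule.Quotient.mk c) = q c := rfl
          have h2 : e.symm (q c) = Submodule.Quotient.mk c := by
            rw [← h1, LinearEquiv.symm_apply_apply]
          rw [hf]
          simp only [LinearMap.comp_apply, LinearEquiv.coe_toLinearMap]
          rw [h2, Submodule.liftQ_apply]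
        refine ⟨f, ?_⟩
        funext i
        rw [hφap, ha]
        beta_reduce
        rw [hfq, Fintype.linearCombination_apply_single, one_smul]
      · rintro ⟨f, rfl⟩
        funext j
        rw [hψap]
        simp only [hφap]
        have hsum : ∑ i, (j : Fin n → k) i • f (a i) = f (q (j : Fin n → k)) := by
          rw [hqc, map_sum]
          exact Finset.sum_congr rfl fun i _ => (map_smul f _ _).symm
        rw [hsum, hjker j, map_zero]
        simp
    set w : Fin n → K ⊗[k] M := fun i => g ((1:K) ⊗ₜ[k] a i) with hw
    set Wt := (TensorProduct.piRight k K K (fun _ : Fin n => M)).symm w with hWt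
    have hpRWt : pR Wt = w := by
      rw [hpR, ← TensorProduct.piRight_apply, hWt, LinearEquiv.apply_symm_apply]
    have L4 : ∀ (t : K ⊗[k] (Fin n → M)) (j : ↥sm),
        pR3 (ψ.baseChange K t) j = ∑ i, (j : Fin n → k) i • pR t i := by
      intro t
      induction t using TensorProduct.induction_on with
      | zero => intro j; simp
      | tmul x v =>
          intro j
          simp only [LinearMap.baseChange_tmul, hpR3, hpR, TensorProduct.piRightHom_tmul]
          rw [hψap, TensorProduct.tmul_sum]
          exact Finset.sum_congr rfl fun i _ => TensorProduct.tmul_smul _ _ _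
      | add t₁ t₂ h₁ h₂ =>
          intro j
          simp only [map_add, Pi.add_apply, h₁, h₂, smul_add, Finset.sum_add_distrib]
    have hψWt : ψ.baseChange K Wt = 0 := by
      apply hinj3
      rw [map_zero]
      funext j
      rw [L4]
      have hterm : ∀ i : Fin n, (j : Fin n → k) i • pR Wt i
          = g ((1:K) ⊗ₜ[k] ((j : Fin n → k) i • a i)) := by
        intro i
        rw [hpRWt, hw]
        beta_reduce
        rw [TensorProduct.tmul_smul, LinearMap.map_smul_of_tower]
      rw [Finset.sum_congr rfl fun i _ => hterm i, ← map_sum, ← TensorProduct.tmul_sum, ← hqc,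
        hjker j, TensorProduct.tmul_zero, map_zero]
      simp
    have hexK := Module.Flat.lTensor_exact K hexact
    obtain ⟨t', ht'⟩ := (hexK Wt).mp (by
      rw [← congrFun (LinearMap.baseChange_eq_ltensor (f := ψ)) Wt]
      exact hψWt)
    have hbcφ : φ.baseChange K t' = Wt := by
      rw [congrFun (LinearMap.baseChange_eq_ltensor (f := φ)) t', ht']
    have hωt' : ω t' = g := by
      apply L3
      intro i
      rw [← L1, hbcφ, hpRWt, hw]
    have hΨ0 : Ψ.baseChange K t' = 0 := by
      apply hinj2
      rw [map_zero]
      funext ij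
      rw [L2, hωt', hg ((1:K) ⊗ₜ[k] a ij.1) ((1:K) ⊗ₜ[k] a ij.2)]
      simp only [Pi.zero_apply]
      abel
    have hexD : Function.Exact D.subtype Ψ := by
      rw [LinearMap.exact_iff, hkerΨ, Submodule.range_subtype]
    have hexDK := Module.Flat.lTensor_exact K hexD
    obtain ⟨t, ht⟩ := (hexDK t').mp (by
      rw [← congrFun (LinearMap.baseChange_eq_ltensor (f := Ψ)) t']
      exact hΨ0)
    refine ⟨t, ?_⟩
    rw [LinearMap.comp_apply, hbc_sub, ht, hωt']
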